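/- arXiv:1701.07489 — 2 statements merged into one kernel-verified Lean document; each statement's English description precedes it below -/
import Mathlib

section
/- (Theorem 2, sign-free form.) Assume h_{ab} ≠ 0 for all 1 ≤ a < b ≤ 5 and F_{ik}F_{jl} − F_{il}F_{jk} ≠ 0 for every permutation (i,j,k,l,m) of (1,…,5). Then for every permutation (i,j,k,l,m) of (1,…,5) and every choice of square roots q (q_s² = ω_s for all 3-element subsets s), one has H(i,j,k,l,m)² = 1/∏_{1≤a<b≤5} h_{ab}. In particular, the square of the paper's quantity H_u of formula (Hu) is one and the same for all pairs (oriented edge b = ij) ⊂ (tetrahedron t = ijkl) of the pentachoron u. -/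
noncomputable section

/-- The remaining fifth vertex of the pentachoron `{0,1,2,3,4}` (vertices `1,…,5` of the
paper, shifted to `Fin 5`), given four pairwise distinct vertices `i, j, k, l`. -/
def fifth (i j k l : Fin 5) : Fin 5 :=
  ⟨(10 - ((i : ℕ) + j + k + l)) % 5, Nat.mod_lt _ (by norm_num)⟩

/-- The edge-operator coefficient `β̃(i,j;k,l) = F_{ik}F_{jl} − F_{il}F_{jk}`. -/
def betaT (F : Fin 5 → Fin 5 → ℂ) (i j k l : Fin 5) : ℂ :=
  F i k * F j l - F i l * F j k

/-- The edge-operator coefficient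
`γ̃(i,j;k,l) = F_{ik}F_{jm}F_{lm} − F_{im}F_{jk}F_{lm} − F_{il}F_{jm}F_{km} + F_{im}F_{jl}F_{km}`,
where `m` is the remaining fifth vertex. -/
def gammaT (F : Fin 5 → Fin 5 → ℂ) (i j k l : Fin 5) : ℂ :=
  F i k * F j (fifth i j k l) * F l (fifth i j k l)
    - F i (fifth i j k l) * F j k * F l (fifth i j k l)
    - F i l * F j (fifth i j k l) * F k (fifth i j k l)
    + F i (fifth i j k l) * F j l * F k (fifth i j k l)

/-- Formula (pf) of the paper, with normalization `p = 1`: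
`h(i,j | k,l) := β̃(k,i;j,l)·γ̃(k,j;l,i) + β̃(k,j;l,i)·γ̃(k,i;j,l)`. -/
def hpair (F : Fin 5 → Fin 5 → ℂ) (i j k l : Fin 5) : ℂ :=
  betaT F k i j l * gammaT F k j l i + betaT F k j l i * gammaT F k i j l

/-- The edge coefficient `h_{ab}` of the unordered edge `{a,b}`: for `a < b` it is
`h(a,b | c,d)` where `c < d` are the two smallest elements of the complement of `{a,b}`,
and `h_{ba} := h_{ab}`. -/
def hEdge (F : Fin 5 → Fin 5 → ℂ) (a b : Fin 5) : ℂ :=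
  hpair F (min a b) (max a b)
    (Finset.sort ((Finset.univ : Finset (Fin 5)) \ {a, b}) (· ≤ ·)).headI
    (Finset.sort ((Finset.univ : Finset (Fin 5)) \ {a, b}) (· ≤ ·)).tail.headI

/-- Formula (ph) with `p = 1`: `ω_{abc} := 1/(h_{ab}·h_{ac}·h_{bc})`. -/
def omegaC (F : Fin 5 → Fin 5 → ℂ) (a b c : Fin 5) : ℂ :=
  1 / (hEdge F a b * hEdge F a c * hEdge F b c)

/-- The quantity `H_u` of formula (Hu), for the pair: oriented edge `b = ij` inside the
tetrahedron `t = ijkl` of the pentachoron `u = ijklm`; `q` assigns a square root of `ω_s`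
to every 3-element subset `s`:
`H(i,j,k,l,m) = h_{ij}·β̃(i,j;k,l)·q_{ijk}q_{ijl}q_{ijm}q_{klm}/(F_{ik}F_{jl} − F_{il}F_{jk})`. -/
def Hu (F : Fin 5 → Fin 5 → ℂ) (q : Finset (Fin 5) → ℂ) (i j k l m : Fin 5) : ℂ :=
  hEdge F i j * betaT F i j k l * q {i, j, k} * q {i, j, l} * q {i, j, m} * q {k, l, m}
    / (F i k * F j l - F i l * F j k)

/-- `hEdge` is symmetric in its two vertex arguments. -/
lemma hEdge_comm (F : Fin 5 → Fin 5 → ℂ) (a b : Fin 5) : hEdge F a b = hEdge F b a := by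
  simp [hEdge, min_comm, max_comm, Finset.pair_comm]

/-- The product over ordered pairs `a < b` is invariant under a permutation of vertices. -/
lemma prod_hEdge_reindex (F : Fin 5 → Fin 5 → ℂ) (σ : Equiv.Perm (Fin 5)) :
    ∏ p ∈ Finset.univ.filter (fun p : Fin 5 × Fin 5 => p.1 < p.2), hEdge F p.1 p.2
      = ∏ p ∈ Finset.univ.filter (fun p : Fin 5 × Fin 5 => p.1 < p.2),
          hEdge F (σ p.1) (σ p.2) := by
  set_option linter.unnecessarySeqFocus false in
  refine Finset.prod_nbij'
    (fun p => if σ⁻¹ p.1 < σ⁻¹ p.2 then (σ⁻¹ p.1, σ⁻¹ p.2) else (σ⁻¹ p.2, σ⁻¹ p.1))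
    (fun p => if σ p.1 < σ p.2 then (σ p.1, σ p.2) else (σ p.2, σ p.1))
    ?_ ?_ ?_ ?_ ?_
  · intro p hp
    simp only [Finset.mem_filter, Finset.mem_univ, true_and] at hp ⊢
    split_ifs with h
    · exact h
    · rcases lt_or_eq_of_le (not_lt.mp h) with h' | h'
      · exact h'
      · exact absurd ((Equiv.injective _) h') (ne_of_gt hp)
  · intro p hp
    simp only [Finset.mem_filter, Finset.mem_univ, true_and] at hp ⊢
    split_ifs with h
    · exact h
    · rcases lt_or_eq_of_le (not_lt.mp h) with h' | h'
      · exact h'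
      · exact absurd ((Equiv.injective _) h') (ne_of_gt hp)
  · intro p hp
    simp only [Finset.mem_filter, Finset.mem_univ, true_and] at hp
    split_ifs with h <;> simp_all <;>
      first
        | rfl
        | exact absurd (hp.trans ‹_ < _›) (lt_irrefl _)
  · intro p hp
    simp only [Finset.mem_filter, Finset.mem_univ, true_and] at hp
    split_ifs with h <;> simp_all <;>
      first
        | rfl
        | exact absurd (hp.trans ‹_ < _›) (lt_irrefl _)
  · intro p hp
    split_ifs with h
    · simp
    · simp [hEdge_comm]

/-- Explicit expansion of a product over the ten ordered pairs `a < b` in `Fin 5`. -/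
lemma prod_pairs_explicit (g : Fin 5 × Fin 5 → ℂ) :
    ∏ p ∈ Finset.univ.filter (fun p : Fin 5 × Fin 5 => p.1 < p.2), g p
      = g (0,1) * g (0,2) * g (0,3) * g (0,4) * g (1,2) * g (1,3) * g (1,4)
        * g (2,3) * g (2,4) * g (3,4) := by
  have hS : Finset.univ.filter (fun p : Fin 5 × Fin 5 => p.1 < p.2)
      = {(0,1),(0,2),(0,3),(0,4),(1,2),(1,3),(1,4),(2,3),(2,4),(3,4)} := by decide
  rw [hS]
  simp [Finset.prod_insert, Finset.mem_insert]
  ring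

/-- Theorem 2, sign-free form: if all `h_{ab} ≠ 0` and all
`β̃(i,j;k,l) = F_{ik}F_{jl} − F_{il}F_{jk} ≠ 0` for permutations `(i,j,k,l,m)` of the
vertices, then for every permutation and every choice of square roots `q` of the cocycle
values `ω`, the square of `H_u` equals `1/∏_{a<b} h_{ab}`. -/
theorem Hu_sq_eq (F : Fin 5 → Fin 5 → ℂ) (hF : ∀ a b, F a b = - F b a)
    (hh : ∀ a b : Fin 5, a < b → hEdge F a b ≠ 0)
    (hbeta : ∀ σ : Equiv.Perm (Fin 5),
      F (σ 0) (σ 2) * F (σ 1) (σ 3) - F (σ 0) (σ 3) * F (σ 1) (σ 2) ≠ 0)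
    (q : Finset (Fin 5) → ℂ)
    (hq : ∀ a b c : Fin 5, a ≠ b → a ≠ c → b ≠ c → (q {a, b, c}) ^ 2 = omegaC F a b c)
    (σ : Equiv.Perm (Fin 5)) :
    (Hu F q (σ 0) (σ 1) (σ 2) (σ 3) (σ 4)) ^ 2
      = 1 / ∏ p ∈ Finset.univ.filter (fun p : Fin 5 × Fin 5 => p.1 < p.2),
            hEdge F p.1 p.2 := by
  -- nonvanishing of `hEdge` for any pair of distinct vertices
  have hne : ∀ a b : Fin 5, a ≠ b → hEdge F a b ≠ 0 := by
    intro a b hab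
    rcases lt_or_gt_of_ne hab with h | h
    · exact hh a b h
    · rw [hEdge_comm]; exact hh b a h
  set i := σ 0 with hi
  set j := σ 1 with hj
  set k := σ 2 with hk
  set l := σ 3 with hl
  set m := σ 4 with hm
  have ne : ∀ a b : Fin 5, a ≠ b → σ a ≠ σ b := fun a b h => σ.injective.ne h
  have hij : i ≠ j := ne 0 1 (by decide)
  have hik : i ≠ k := ne 0 2 (by decide)
  have hil : i ≠ l := ne 0 3 (by decide)
  have him : i ≠ m := ne 0 4 (by decide)
  have hjk : j ≠ k := ne 1 2 (by decide)
  have hjl : j ≠ l := ne 1 3 (by decide)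
  have hjm : j ≠ m := ne 1 4 (by decide)
  have hkl : k ≠ l := ne 2 3 (by decide)
  have hkm : k ≠ m := ne 2 4 (by decide)
  have hlm : l ≠ m := ne 3 4 (by decide)
  have hD : F i k * F j l - F i l * F j k ≠ 0 := hbeta σ
  -- the `β̃` factor cancels against the denominator
  have key : Hu F q i j k l m
      = hEdge F i j * q {i, j, k} * q {i, j, l} * q {i, j, m} * q {k, l, m} := by
    unfold Hu betaT
    field_simp
  rw [key]
  have exp2 : (hEdge F i j * q {i, j, k} * q {i, j, l} * q {i, j, m} * q {k, l, m}) ^ 2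
      = hEdge F i j ^ 2 * (q {i, j, k}) ^ 2 * (q {i, j, l}) ^ 2 * (q {i, j, m}) ^ 2
        * (q {k, l, m}) ^ 2 := by ring
  rw [exp2, hq i j k hij hik hjk, hq i j l hij hil hjl, hq i j m hij him hjm,
    hq k l m hkl hkm hlm]
  -- reindex the product over pairs by σ and expand it
  rw [prod_hEdge_reindex F σ, prod_pairs_explicit (fun p => hEdge F (σ p.1) (σ p.2))]
  simp only [← hi, ← hj, ← hk, ← hl, ← hm]
  unfold omegaC
  have n1 : hEdge F i j ≠ 0 := hne _ _ hij
  have n2 : hEdge F i k ≠ 0 := hne _ _ hik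
  have n3 : hEdge F i l ≠ 0 := hne _ _ hil
  have n4 : hEdge F i m ≠ 0 := hne _ _ him
  have n5 : hEdge F j k ≠ 0 := hne _ _ hjk
  have n6 : hEdge F j l ≠ 0 := hne _ _ hjl
  have n7 : hEdge F j m ≠ 0 := hne _ _ hjm
  have n8 : hEdge F k l ≠ 0 := hne _ _ hkl
  have n9 : hEdge F k m ≠ 0 := hne _ _ hkm
  have n10 : hEdge F l m ≠ 0 := hne _ _ hlm
  clear hh hne hq hbeta hF ne key exp2 hD
  field_simp
end
end

section
/- (Algebraic core of Theorem 5, sign-free form.) Let m be the 3×3 complex matrix m := [[h₁₂·β̃(1,2;3,4), h₁₂·β̃(1,2;3,5), h₁₂·β̃(1,2;4,5)], [h₁₃·β̃(1,3;4,2), h₁₃·β̃(1,3;5,2), 0], [h₁₄·β̃(1,4;2,3), 0, h₁₄·β̃(1,4;5,2)]]; this is the matrix of the coefficients β_{bt} = h_b·β̃_{bt} of the differentiations ∂_{1234}, ∂_{1235}, ∂_{1245} in the edge operators d₁₂, d₁₃, d₁₄ (the paper's matrix m for the second move 0–2, with the pentachoron 13456 relabelled as 12345, so that the new vertex is 1 and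 the inflated tetrahedron is 2345). Then (det m)² = (h₁₂·h₁₃·h₁₄·h₁₅·F₁₂)², where F₁₂ is the entry of F between the facets {2,3,4,5} and {1,3,4,5}. (This is the squared, sign-free content of Theorem 5 combined with the evaluation (Psi*): up to sign, −det m/F₁₂ equals η_u² divided by the product of q_s over the six new 2-faces containing the new vertex.) -/
noncomputable section

lemma sort_compl_01 :
    (Finset.sort ((Finset.univ : Finset (Fin 5)) \ {0, 1}) (· ≤ ·)) = [2, 3, 4] := by
  refine List.Perm.eq_of_pairwise' (Finset.pairwise_sort _ _) (by decide) (Multiset.coe_eq_coe.mp ?_)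
  rw [Finset.sort_eq]; decide

lemma sort_compl_02 :
    (Finset.sort ((Finset.univ : Finset (Fin 5)) \ {0, 2}) (· ≤ ·)) = [1, 3, 4] := by
  refine List.Perm.eq_of_pairwise' (Finset.pairwise_sort _ _) (by decide) (Multiset.coe_eq_coe.mp ?_)
  rw [Finset.sort_eq]; decide

lemma sort_compl_03 :
    (Finset.sort ((Finset.univ : Finset (Fin 5)) \ {0, 3}) (· ≤ ·)) = [1, 2, 4] := by
  refine List.Perm.eq_of_pairwise' (Finset.pairwise_sort _ _) (by decide) (Multiset.coe_eq_coe.mp ?_)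
  rw [Finset.sort_eq]; decide

lemma sort_compl_04 :
    (Finset.sort ((Finset.univ : Finset (Fin 5)) \ {0, 4}) (· ≤ ·)) = [1, 2, 3] := by
  refine List.Perm.eq_of_pairwise' (Finset.pairwise_sort _ _) (by decide) (Multiset.coe_eq_coe.mp ?_)
  rw [Finset.sort_eq]; decide

lemma hEdge01 (F : Fin 5 → Fin 5 → ℂ) : hEdge F 0 1 = hpair F 0 1 2 3 := by
  rw [hEdge, sort_compl_01]; rfl

lemma hEdge02 (F : Fin 5 → Fin 5 → ℂ) : hEdge F 0 2 = hpair F 0 2 1 3 := by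
  rw [hEdge, sort_compl_02]; rfl

lemma hEdge03 (F : Fin 5 → Fin 5 → ℂ) : hEdge F 0 3 = hpair F 0 3 1 2 := by
  rw [hEdge, sort_compl_03]; rfl

lemma hEdge04 (F : Fin 5 → Fin 5 → ℂ) : hEdge F 0 4 = hpair F 0 4 1 2 := by
  rw [hEdge, sort_compl_04]; rfl

lemma diag_zero (F : Fin 5 → Fin 5 → ℂ) (hF : ∀ a b, F a b = - F b a) (a : Fin 5) :
    F a a = 0 := by linear_combination (hF a a) / 2

set_option maxHeartbeats 1000000 in
lemma key_det (F : Fin 5 → Fin 5 → ℂ) (hF : ∀ a b, F a b = - F b a) :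
    (Matrix.det
      !![betaT F 0 1 2 3, betaT F 0 1 2 4, betaT F 0 1 3 4;
         betaT F 0 2 3 1, betaT F 0 2 4 1, 0;
         betaT F 0 3 1 2, 0, betaT F 0 3 4 1])
      = hEdge F 0 4 * F 0 1 := by
  rw [hEdge04]
  have f1 : fifth 1 4 2 0 = 3 := by decide
  have f2 : fifth 1 0 4 2 = 3 := by decide
  simp [Matrix.det_fin_three]
  simp only [hpair, betaT]
  simp only [gammaT, f1, f2]
  simp only [hF 1 0, hF 2 0, hF 2 1, hF 3 0, hF 3 1, hF 3 2, hF 4 0, hF 4 1, hF 4 2, hF 4 3,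
    diag_zero F hF]
  ring

/-- algebraic core of Theorem 5, sign-free form. Vertices `1,…,5` of the
paper are `0,…,4` of `Fin 5`; `m` is the matrix of the coefficients `β_{bt} = h_b·β̃_{bt}`
of `∂_{1234}, ∂_{1235}, ∂_{1245}` in the edge operators `d₁₂, d₁₃, d₁₄`. Then
`(det m)² = (h₁₂·h₁₃·h₁₄·h₁₅·F₁₂)²`. -/
theorem det_m_sq (F : Fin 5 → Fin 5 → ℂ) (hF : ∀ a b, F a b = - F b a) :
    (Matrix.det
      !![hEdge F 0 1 * betaT F 0 1 2 3, hEdge F 0 1 * betaT F 0 1 2 4,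
           hEdge F 0 1 * betaT F 0 1 3 4;
         hEdge F 0 2 * betaT F 0 2 3 1, hEdge F 0 2 * betaT F 0 2 4 1, 0;
         hEdge F 0 3 * betaT F 0 3 1 2, 0, hEdge F 0 3 * betaT F 0 3 4 1]) ^ 2
      = (hEdge F 0 1 * hEdge F 0 2 * hEdge F 0 3 * hEdge F 0 4 * F 0 1) ^ 2 := by
  have hM : (Matrix.det
      !![hEdge F 0 1 * betaT F 0 1 2 3, hEdge F 0 1 * betaT F 0 1 2 4,
           hEdge F 0 1 * betaT F 0 1 3 4;
         hEdge F 0 2 * betaT F 0 2 3 1, hEdge F 0 2 * betaT F 0 2 4 1, 0;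
         hEdge F 0 3 * betaT F 0 3 1 2, 0, hEdge F 0 3 * betaT F 0 3 4 1])
      = hEdge F 0 1 * hEdge F 0 2 * hEdge F 0 3 *
        (Matrix.det
      !![betaT F 0 1 2 3, betaT F 0 1 2 4, betaT F 0 1 3 4;
         betaT F 0 2 3 1, betaT F 0 2 4 1, 0;
         betaT F 0 3 1 2, 0, betaT F 0 3 4 1]) := by
    simp [Matrix.det_fin_three]
    ring
  rw [hM, key_det F hF]
  ring
end
end
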